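/- Let n ≥ 1, let M ∈ GL(n, ℝ), let t = ‖M‖ be the operator norm of M, and let v ∈ ℝⁿ be a unit vector with ‖M v‖ = t. Set V = (M v)^⊥ (the orthogonal complement of M v) and W = M^{−1}(V). Let τ > 0 and let Z ⊆ ℝⁿ be τ-separated, i.e. d(z₁, z₂) ≥ τ for all distinct z₁, z₂ ∈ Z. For z ∈ Z define Y(z) = (M^{−1}z + W) ∩ M^{−1}(B(z, τ/4)). Then for all distinct z₁, z₂ ∈ Z and all points y₁ ∈ Y(z₁), y₂ ∈ Y(z₂), one has d(y₁, y₂) ≥ τ/(2t). -/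

import Mathlib

open Metric Set

/-- Let `M ∈ GL(n, ℝ)`, `t = ‖M‖`, `v` a unit vector with
`‖M v‖ = t`, `W = M⁻¹((M v)^⊥)`, and let `Z` be `τ`-separated.  For `z ∈ Z` let
`Y(z) = (M⁻¹z + W) ∩ M⁻¹(B(z, τ/4))`, i.e. `y ∈ Y(z)` iff `⟪M y − z, M v⟫ = 0`
and `M y ∈ B(z, τ/4)`.  Then points of `Y(z₁)`, `Y(z₂)` for distinct
`z₁, z₂ ∈ Z` are at distance at least `τ/(2t)`. -/
theorem stmt15 (n : ℕ) (hn : 1 ≤ n)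
    (M : EuclideanSpace ℝ (Fin n) →L[ℝ] EuclideanSpace ℝ (Fin n))
    (hM : Function.Bijective M)
    (v : EuclideanSpace ℝ (Fin n)) (hv : ‖v‖ = 1) (hMv : ‖M v‖ = ‖M‖)
    (τ : ℝ) (hτ : 0 < τ)
    (Z : Set (EuclideanSpace ℝ (Fin n)))
    (hZ : ∀ z₁ ∈ Z, ∀ z₂ ∈ Z, z₁ ≠ z₂ → τ ≤ dist z₁ z₂)
    (z₁ z₂ : EuclideanSpace ℝ (Fin n)) (hz₁ : z₁ ∈ Z) (hz₂ : z₂ ∈ Z) (hne : z₁ ≠ z₂)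
    (y₁ y₂ : EuclideanSpace ℝ (Fin n))
    (hy₁W : (inner ℝ (M y₁ - z₁) (M v) : ℝ) = 0) (hy₁B : M y₁ ∈ closedBall z₁ (τ / 4))
    (hy₂W : (inner ℝ (M y₂ - z₂) (M v) : ℝ) = 0) (hy₂B : M y₂ ∈ closedBall z₂ (τ / 4)) :
    τ / (2 * ‖M‖) ≤ dist y₁ y₂ := by
  have hv0 : v ≠ 0 := fun h => by simp [h] at hv
  have hMv0 : M v ≠ 0 := fun h => hv0 (hM.1 (by simp [h]))
  have ht : 0 < ‖M‖ := by rw [← hMv]; exact norm_pos_iff.mpr hMv0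
  have h1 : dist z₁ (M y₁) ≤ τ / 4 := by
    rw [dist_comm]; exact mem_closedBall.mp hy₁B
  have h2 : dist (M y₂) z₂ ≤ τ / 4 := mem_closedBall.mp hy₂B
  have hmid : τ / 2 ≤ dist (M y₁) (M y₂) := by
    have := hZ z₁ hz₁ z₂ hz₂ hne
    have htri : dist z₁ z₂ ≤ dist z₁ (M y₁) + dist (M y₁) (M y₂) + dist (M y₂) z₂ :=
      dist_triangle4 _ _ _ _
    linarith
  have hlip : dist (M y₁) (M y₂) ≤ ‖M‖ * dist y₁ y₂ := by
    rw [dist_eq_norm, dist_eq_norm, ← map_sub]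
    exact M.le_opNorm _
  rw [div_le_iff₀ (by positivity)]
  calc τ = 2 * (τ / 2) := by ring
    _ ≤ 2 * dist (M y₁) (M y₂) := by linarith
    _ ≤ 2 * (‖M‖ * dist y₁ y₂) := by linarith
    _ = dist y₁ y₂ * (2 * ‖M‖) := by ring
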